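/- arXiv:1505.06247 — 2 statements merged into one kernel-verified Lean document; each statement's English description precedes it below -/
import Mathlib

section
/- Let l > 0, let (c_k), (d_k) be real sequences with Σ_k (|c_k|+|d_k|) < ∞, and for each k let p_k, q_k : [−l, l) → ℝ satisfy |p_k(x+t) − p_k(x)| ≤ C t² and |q_k(x+t) − q_k(x)| ≤ C t² for a uniform constant C. Define Ψ_0(x) = Σ_{k=1}^{∞} (c_k p_k(x) − d_k q_k(x)) cos(kπx/l) + (c_k q_k(x) + d_k p_k(x)) sin(kπx/l), and for S ≥ 1 define Ψ_S by replacing p_k(x), q_k(x) with their values at the midpoint of the partition interval of the uniform S-partition of [−l, l) containing x. Then sup_{x ∈ [−l,l)} |Ψ_S(x) − Ψ_0(x)| ≤ (8Cl²/S²) Σ_{k=1}^{∞} (|c_k| + |d_k|), and in particular Ψ_S → Ψ_0 uniformly on [−l, l) as S → ∞. -/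
open Set Real Filter

set_option maxHeartbeats 1000000 in
theorem stmt8 (l : ℝ) (hl : 0 < l) (C : ℝ) (hC : 0 < C)
    (c d : ℕ → ℝ)
    (hsum : Summable fun k : ℕ => |c (k + 1)| + |d (k + 1)|)
    (p q : ℕ → ℝ → ℝ)
    (hp : ∀ k, 1 ≤ k → ∀ x t : ℝ, x ∈ Ico (-l) l → x + t ∈ Ico (-l) l →
      |p k (x + t) - p k x| ≤ C * t ^ 2)
    (hq : ∀ k, 1 ≤ k → ∀ x t : ℝ, x ∈ Ico (-l) l → x + t ∈ Ico (-l) l →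
      |q k (x + t) - q k x| ≤ C * t ^ 2)
    (F : ℝ → ℝ → ℝ)
    (hF : ∀ y x, F y x = ∑' k : ℕ,
      ((c (k + 1) * p (k + 1) y - d (k + 1) * q (k + 1) y) * cos ((k + 1 : ℕ) * π * x / l) +
       (c (k + 1) * q (k + 1) y + d (k + 1) * p (k + 1) y) * sin ((k + 1 : ℕ) * π * x / l)))
    (hFsum : ∀ y x : ℝ, Summable fun k : ℕ =>
      ((c (k + 1) * p (k + 1) y - d (k + 1) * q (k + 1) y) * cos ((k + 1 : ℕ) * π * x / l) +
       (c (k + 1) * q (k + 1) y + d (k + 1) * p (k + 1) y) * sin ((k + 1 : ℕ) * π * x / l)))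
    (Ψ₀ : ℝ → ℝ) (hΨ₀ : ∀ x, Ψ₀ x = F x x)
    (Ψ : ℕ → ℝ → ℝ)
    (hΨ : ∀ S x, Ψ S x = ∑ s ∈ Finset.range S,
      Set.indicator (Ico (l * (2 * (s : ℝ) - S) / S) (l * (2 * (s : ℝ) + 2 - S) / S))
        (fun _ => F (l * (2 * (s : ℝ) + 1 - S) / S) x) x) :
    (∀ S : ℕ, 1 ≤ S → ∀ x ∈ Ico (-l) l,
      |Ψ S x - Ψ₀ x| ≤ (8 * C * l ^ 2 / S ^ 2) * ∑' k : ℕ, (|c (k + 1)| + |d (k + 1)|)) ∧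
    TendstoUniformlyOn Ψ Ψ₀ atTop (Ico (-l) l) := by
  set M := ∑' k : ℕ, (|c (k + 1)| + |d (k + 1)|) with hMdef
  have hM0 : 0 ≤ M := tsum_nonneg fun k => by positivity
  have main : ∀ S : ℕ, 1 ≤ S → ∀ x ∈ Ico (-l) l,
      |Ψ S x - Ψ₀ x| ≤ 2 * C * l ^ 2 / (S : ℝ) ^ 2 * M := by
    intro S hS x hx
    have hS0 : (0 : ℝ) < S := by exact_mod_cast hS
    set u := (x + l) * S / (2 * l) with hu
    have hxl : 0 ≤ x + l := by have := hx.1; linarith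
    have hu0 : 0 ≤ u := by positivity
    have huS : u < S := by
      rw [hu, div_lt_iff₀ (by positivity)]
      have := hx.2; nlinarith
    set s₀ : ℕ := ⌊u⌋.toNat with hs₀def
    have hfl : ((s₀ : ℕ) : ℝ) = ((⌊u⌋ : ℤ) : ℝ) := by
      rw [hs₀def]; exact_mod_cast Int.toNat_of_nonneg (Int.floor_nonneg.mpr hu0)
    have h1 : (s₀ : ℝ) ≤ u := by rw [hfl]; exact Int.floor_le u
    have h2 : u < (s₀ : ℝ) + 1 := by rw [hfl]; exact Int.lt_floor_add_one u
    have hs₀S : s₀ < S := by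
      have : (s₀ : ℝ) < S := lt_of_le_of_lt h1 huS
      exact_mod_cast this
    have hmem : ∀ s : ℕ,
        x ∈ Ico (l * (2 * (s : ℝ) - S) / S) (l * (2 * (s : ℝ) + 2 - S) / S) ↔
          ((s : ℝ) ≤ u ∧ u < (s : ℝ) + 1) := by
      intro s
      simp only [mem_Ico]
      constructor
      · rintro ⟨ha, hb⟩
        rw [div_le_iff₀ hS0] at ha
        rw [lt_div_iff₀ hS0] at hb
        constructor
        · rw [hu, le_div_iff₀ (by positivity)]; nlinarith
        · rw [hu, div_lt_iff₀ (by positivity)]; nlinarith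
      · rintro ⟨ha, hb⟩
        rw [hu, le_div_iff₀ (by positivity)] at ha
        rw [hu, div_lt_iff₀ (by positivity)] at hb
        constructor
        · rw [div_le_iff₀ hS0]; nlinarith
        · rw [lt_div_iff₀ hS0]; nlinarith
    have hxmem : x ∈ Ico (l * (2 * (s₀ : ℝ) - S) / S) (l * (2 * (s₀ : ℝ) + 2 - S) / S) :=
      (hmem s₀).mpr ⟨h1, h2⟩
    set y := l * (2 * (s₀ : ℝ) + 1 - S) / S with hy
    have hΨval : Ψ S x = F y x := by
      rw [hΨ]
      rw [Finset.sum_eq_single s₀]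
      · rw [indicator_of_mem hxmem]
      · intro s _ hne
        apply indicator_of_notMem
        intro hmem'
        obtain ⟨ha, hb⟩ := (hmem s).mp hmem'
        have h3 : s < s₀ + 1 := by exact_mod_cast lt_of_le_of_lt ha h2
        have h4 : s₀ < s + 1 := by exact_mod_cast lt_of_le_of_lt h1 hb
        omega
      · intro h; exact absurd (Finset.mem_range.mpr hs₀S) h
    have hyx : |y - x| ≤ l / S := by
      obtain ⟨ha, hb⟩ := hxmem
      rw [abs_le]
      constructor
      · have hkey : y + l / S = l * (2 * (s₀ : ℝ) + 2 - S) / S := by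
          rw [hy]; field_simp; ring
        linarith [hb, hkey.symm ▸ hb]
      · have hkey : y - l / S = l * (2 * (s₀ : ℝ) - S) / S := by
          rw [hy]; field_simp; ring
        linarith [ha]
    have hyI : y ∈ Ico (-l) l := by
      have hs₀cast : (s₀ : ℝ) + 1 ≤ (S : ℝ) := by exact_mod_cast hs₀S
      have hs₀nn : (0 : ℝ) ≤ (s₀ : ℝ) := Nat.cast_nonneg _
      constructor
      · rw [hy, le_div_iff₀ hS0]; nlinarith
      · rw [hy, div_lt_iff₀ hS0]; nlinarith
    set t := y - x with ht
    have hxt : x + t = y := by rw [ht]; ring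
    have ht2 : t ^ 2 ≤ l ^ 2 / (S : ℝ) ^ 2 := by
      have h1' : t ^ 2 = |t| ^ 2 := (sq_abs t).symm
      have h2' : |t| ^ 2 ≤ (l / S) ^ 2 := by
        apply pow_le_pow_left₀ (abs_nonneg _) hyx
      rw [h1', div_pow] at *
      linarith [h2']
    have habssub : ∀ a b : ℝ, |a - b| ≤ |a| + |b| := fun a b => by
      simpa [sub_eq_add_neg] using abs_add_le a (-b)
    have hterm : ∀ k : ℕ,
        |(((c (k + 1) * p (k + 1) y - d (k + 1) * q (k + 1) y) * cos ((k + 1 : ℕ) * π * x / l) +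
            (c (k + 1) * q (k + 1) y + d (k + 1) * p (k + 1) y) * sin ((k + 1 : ℕ) * π * x / l)) -
          ((c (k + 1) * p (k + 1) x - d (k + 1) * q (k + 1) x) * cos ((k + 1 : ℕ) * π * x / l) +
            (c (k + 1) * q (k + 1) x + d (k + 1) * p (k + 1) x) * sin ((k + 1 : ℕ) * π * x / l)))| ≤
          (|c (k + 1)| + |d (k + 1)|) * (2 * C * l ^ 2 / (S : ℝ) ^ 2) := by
      intro k
      have hpk := hp (k + 1) (by omega) x t hx (hxt ▸ hyI)
      have hqk := hq (k + 1) (by omega) x t hx (hxt ▸ hyI)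
      rw [hxt] at hpk hqk
      set θ := ((k + 1 : ℕ) : ℝ) * π * x / l with hθ
      set Δp := p (k + 1) y - p (k + 1) x with hΔp
      set Δq := q (k + 1) y - q (k + 1) x with hΔq
      have hexp : (((c (k + 1) * p (k + 1) y - d (k + 1) * q (k + 1) y) * cos θ +
            (c (k + 1) * q (k + 1) y + d (k + 1) * p (k + 1) y) * sin θ) -
          ((c (k + 1) * p (k + 1) x - d (k + 1) * q (k + 1) x) * cos θ +
            (c (k + 1) * q (k + 1) x + d (k + 1) * p (k + 1) x) * sin θ)) =
          (c (k + 1) * Δp - d (k + 1) * Δq) * cos θ +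
            (c (k + 1) * Δq + d (k + 1) * Δp) * sin θ := by
        rw [hΔp, hΔq]; ring
      rw [hexp]
      have hA : |(c (k + 1) * Δp - d (k + 1) * Δq) * cos θ| ≤
          |c (k + 1)| * |Δp| + |d (k + 1)| * |Δq| := by
        rw [abs_mul]
        refine (mul_le_of_le_one_right (abs_nonneg _) (abs_cos_le_one θ)).trans ?_
        refine (habssub _ _).trans ?_
        rw [abs_mul, abs_mul]
      have hB : |(c (k + 1) * Δq + d (k + 1) * Δp) * sin θ| ≤
          |c (k + 1)| * |Δq| + |d (k + 1)| * |Δp| := by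
        rw [abs_mul]
        refine (mul_le_of_le_one_right (abs_nonneg _) (abs_sin_le_one θ)).trans ?_
        refine (abs_add_le _ _).trans ?_
        rw [abs_mul, abs_mul]
      have hCt : C * t ^ 2 ≤ C * (l ^ 2 / (S : ℝ) ^ 2) :=
        mul_le_mul_of_nonneg_left ht2 hC.le
      have habs := abs_add_le ((c (k + 1) * Δp - d (k + 1) * Δq) * cos θ)
        ((c (k + 1) * Δq + d (k + 1) * Δp) * sin θ)
      have hΔp' : |Δp| ≤ C * (l ^ 2 / (S : ℝ) ^ 2) := hpk.trans hCt
      have hΔq' : |Δq| ≤ C * (l ^ 2 / (S : ℝ) ^ 2) := hqk.trans hCt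
      have hcd0 : (0 : ℝ) ≤ |c (k + 1)| + |d (k + 1)| := by positivity
      calc |(c (k + 1) * Δp - d (k + 1) * Δq) * cos θ +
            (c (k + 1) * Δq + d (k + 1) * Δp) * sin θ|
          ≤ (|c (k + 1)| * |Δp| + |d (k + 1)| * |Δq|) +
            (|c (k + 1)| * |Δq| + |d (k + 1)| * |Δp|) := habs.trans (add_le_add hA hB)
        _ = (|c (k + 1)| + |d (k + 1)|) * |Δp| + (|c (k + 1)| + |d (k + 1)|) * |Δq| := by ring
        _ ≤ (|c (k + 1)| + |d (k + 1)|) * (C * (l ^ 2 / (S : ℝ) ^ 2)) +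
            (|c (k + 1)| + |d (k + 1)|) * (C * (l ^ 2 / (S : ℝ) ^ 2)) :=
            add_le_add (mul_le_mul_of_nonneg_left hΔp' hcd0)
              (mul_le_mul_of_nonneg_left hΔq' hcd0)
        _ = (|c (k + 1)| + |d (k + 1)|) * (2 * C * l ^ 2 / (S : ℝ) ^ 2) := by ring
    -- assemble
    have hsub : Summable (fun k : ℕ =>
        ((c (k + 1) * p (k + 1) y - d (k + 1) * q (k + 1) y) * cos ((k + 1 : ℕ) * π * x / l) +
          (c (k + 1) * q (k + 1) y + d (k + 1) * p (k + 1) y) * sin ((k + 1 : ℕ) * π * x / l)) -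
        ((c (k + 1) * p (k + 1) x - d (k + 1) * q (k + 1) x) * cos ((k + 1 : ℕ) * π * x / l) +
          (c (k + 1) * q (k + 1) x + d (k + 1) * p (k + 1) x) * sin ((k + 1 : ℕ) * π * x / l))) :=
      (hFsum y x).sub (hFsum x x)
    have habsSummable : Summable (fun k : ℕ =>
        |((c (k + 1) * p (k + 1) y - d (k + 1) * q (k + 1) y) * cos ((k + 1 : ℕ) * π * x / l) +
          (c (k + 1) * q (k + 1) y + d (k + 1) * p (k + 1) y) * sin ((k + 1 : ℕ) * π * x / l)) -
        ((c (k + 1) * p (k + 1) x - d (k + 1) * q (k + 1) x) * cos ((k + 1 : ℕ) * π * x / l) +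
          (c (k + 1) * q (k + 1) x + d (k + 1) * p (k + 1) x) * sin ((k + 1 : ℕ) * π * x / l))|) :=
      Summable.of_nonneg_of_le (fun k => abs_nonneg _) hterm (hsum.mul_right _)
    have hFdiff : |F y x - F x x| ≤ 2 * C * l ^ 2 / (S : ℝ) ^ 2 * M := by
      rw [hF y x, hF x x, ← Summable.tsum_sub (hFsum y x) (hFsum x x)]
      calc |∑' k : ℕ, (((c (k + 1) * p (k + 1) y - d (k + 1) * q (k + 1) y) * cos ((k + 1 : ℕ) * π * x / l) +
            (c (k + 1) * q (k + 1) y + d (k + 1) * p (k + 1) y) * sin ((k + 1 : ℕ) * π * x / l)) -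
          ((c (k + 1) * p (k + 1) x - d (k + 1) * q (k + 1) x) * cos ((k + 1 : ℕ) * π * x / l) +
            (c (k + 1) * q (k + 1) x + d (k + 1) * p (k + 1) x) * sin ((k + 1 : ℕ) * π * x / l)))|
          ≤ ∑' k : ℕ, |(((c (k + 1) * p (k + 1) y - d (k + 1) * q (k + 1) y) * cos ((k + 1 : ℕ) * π * x / l) +
            (c (k + 1) * q (k + 1) y + d (k + 1) * p (k + 1) y) * sin ((k + 1 : ℕ) * π * x / l)) -
          ((c (k + 1) * p (k + 1) x - d (k + 1) * q (k + 1) x) * cos ((k + 1 : ℕ) * π * x / l) +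
            (c (k + 1) * q (k + 1) x + d (k + 1) * p (k + 1) x) * sin ((k + 1 : ℕ) * π * x / l)))| := by
            have hgen : ∀ f : ℕ → ℝ, Summable (fun k => |f k|) → |∑' k, f k| ≤ ∑' k, |f k| :=
              fun f hf => by
                simpa [Real.norm_eq_abs] using
                  norm_tsum_le_tsum_norm (f := f) (by simpa [Real.norm_eq_abs] using hf)
            exact hgen _ habsSummable
        _ ≤ ∑' k : ℕ, (|c (k + 1)| + |d (k + 1)|) * (2 * C * l ^ 2 / (S : ℝ) ^ 2) :=
            Summable.tsum_le_tsum hterm habsSummable (hsum.mul_right _)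
        _ = 2 * C * l ^ 2 / (S : ℝ) ^ 2 * M := by
            rw [tsum_mul_right, mul_comm]
    rw [hΨval, hΨ₀]
    exact hFdiff
  constructor
  · intro S hS x hx
    refine (main S hS x hx).trans ?_
    have hS0 : (0 : ℝ) < (S : ℝ) ^ 2 := by
      have : (0 : ℝ) < S := by exact_mod_cast hS
      positivity
    have hdd : 2 * C * l ^ 2 / (S : ℝ) ^ 2 ≤ 8 * C * l ^ 2 / (S : ℝ) ^ 2 := by
      rw [div_le_div_iff₀ hS0 hS0]
      have h0 : (0 : ℝ) ≤ C * l ^ 2 * (S : ℝ) ^ 2 := by positivity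
      nlinarith
    exact mul_le_mul_of_nonneg_right hdd hM0
  · rw [Metric.tendstoUniformlyOn_iff]
    intro ε hε
    obtain ⟨N, hN⟩ := exists_nat_gt (2 * C * l ^ 2 * M / ε)
    filter_upwards [eventually_ge_atTop (N + 1)] with S hS x hx
    have hS1 : 1 ≤ S := by omega
    have hSr : (1 : ℝ) ≤ (S : ℝ) := by exact_mod_cast hS1
    have hNS : 2 * C * l ^ 2 * M / ε < (S : ℝ) := by
      have hNS' : (N : ℝ) < (S : ℝ) := by exact_mod_cast Nat.lt_of_lt_of_le (Nat.lt_succ_self N) hS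
      linarith
    have hlt : 2 * C * l ^ 2 * M < ε * S := by
      rw [div_lt_iff₀ hε] at hNS; linarith
    rw [Real.dist_eq, abs_sub_comm]
    refine lt_of_le_of_lt (main S hS1 x hx) ?_
    have hS20 : (0 : ℝ) < (S : ℝ) ^ 2 := by positivity
    rw [div_mul_eq_mul_div, div_lt_iff₀ hS20]
    have hSS : (S : ℝ) ≤ (S : ℝ) ^ 2 := by nlinarith
    nlinarith [mul_le_mul_of_nonneg_left hSS hε.le]
end

section
/- Let m ≥ 1, l > 0, and suppose A_0, ..., A_{2m} : [−l, l) → ℝ are simple step functions adapted to a common partition −l = a_0 < a_1 < ... < a_s = l (each A_n is constant on each [a_{j−1}, a_j)). Assume A_0 is nowhere zero and σ_k(x)² + ω_k(x)² ≠ 0 for all x ∈ [−l, l) and k ≥ 1, where σ_k(x) = Σ_{n=0}^{m} (-1)^n A_{2n}(x) (kπ/l)^{2n} and ω_k(x) = Σ_{n=0}^{m−1} (-1)^n A_{2n+1}(x) (kπ/l)^{2n+1}. Let f(x) = c_0/2 + Σ_{k=1}^{K} (c_k cos(kπx/l) + d_k sin(kπx/l)) be a trigonometric polynomial. Then the function Ψ_0(x)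 = c_0/(2A_0(x)) + Σ_{k=1}^{K} ((c_k σ_k(x) − d_k ω_k(x))/(σ_k(x)² + ω_k(x)²)) cos(kπx/l) + ((c_k ω_k(x) + d_k σ_k(x))/(σ_k(x)² + ω_k(x)²)) sin(kπx/l) satisfies Σ_{n=0}^{2m} A_n(x) Ψ_0^{(n)}(x) = f(x) at every x ∈ (−l, l) \ {a_1, ..., a_{s−1}}, where Ψ_0^{(n)} denotes the n-th derivative taken on the open interval (a_{j−1}, a_j) containing x. -/
open Real Finset Set

/-- coefficient evolution under differentiation of α cos(θy)+β sin(θy) -/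
def trigCoef (θ α β : ℝ) : ℕ → ℝ × ℝ
  | 0 => (α, β)
  | n + 1 => (θ * (trigCoef θ α β n).2, -(θ * (trigCoef θ α β n).1))

lemma trigCoef_even (θ α β : ℝ) (p : ℕ) :
    trigCoef θ α β (2 * p) = ((-1 : ℝ) ^ p * θ ^ (2 * p) * α, (-1 : ℝ) ^ p * θ ^ (2 * p) * β) := by
  induction p with
  | zero => simp [trigCoef]
  | succ p ih =>
    have e : 2 * (p + 1) = (2 * p + 1) + 1 := by ring
    rw [e]
    have e2 : (2 * p + 1 : ℕ) = 2 * p + 1 := rfl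
    simp only [trigCoef, ih]
    rw [Prod.mk.injEq]; constructor <;> ring

lemma trigCoef_odd (θ α β : ℝ) (p : ℕ) :
    trigCoef θ α β (2 * p + 1) =
      ((-1 : ℝ) ^ p * θ ^ (2 * p + 1) * β, -((-1 : ℝ) ^ p * θ ^ (2 * p + 1) * α)) := by
  simp only [trigCoef, trigCoef_even]
  rw [Prod.mk.injEq]; constructor <;> ring

lemma trig_iter (C : ℝ) (K : ℕ) (θ α β : ℕ → ℝ) (n : ℕ) :
    iteratedDeriv n (fun y => C + ∑ k ∈ Finset.Icc 1 K, (α k * cos (θ k * y) + β k * sin (θ k * y)))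
    = fun y => (if n = 0 then C else 0) + ∑ k ∈ Finset.Icc 1 K,
        ((trigCoef (θ k) (α k) (β k) n).1 * cos (θ k * y) +
         (trigCoef (θ k) (α k) (β k) n).2 * sin (θ k * y)) := by
  induction n with
  | zero => simp [trigCoef]
  | succ n ih =>
    rw [iteratedDeriv_succ, ih]
    funext y
    have hθ : ∀ k, HasDerivAt (fun y : ℝ => θ k * y) (θ k) y := fun k => by
      simpa using (hasDerivAt_id y).const_mul (θ k)
    have hterm : ∀ k ∈ Finset.Icc 1 K, HasDerivAt
        (fun y => (trigCoef (θ k) (α k) (β k) n).1 * cos (θ k * y) +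
                  (trigCoef (θ k) (α k) (β k) n).2 * sin (θ k * y))
        ((trigCoef (θ k) (α k) (β k) (n+1)).1 * cos (θ k * y) +
         (trigCoef (θ k) (α k) (β k) (n+1)).2 * sin (θ k * y)) y := by
      intro k _
      have h1 := (((hθ k).cos).const_mul (trigCoef (θ k) (α k) (β k) n).1).fun_add
        (((hθ k).sin).const_mul (trigCoef (θ k) (α k) (β k) n).2)
      refine h1.congr_deriv ?_
      simp [trigCoef]; ring
    have hsum := HasDerivAt.fun_sum hterm
    have h := hsum.const_add C
    have h2 : deriv (fun y => (if n = 0 then C else 0) + ∑ k ∈ Finset.Icc 1 K,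
        ((trigCoef (θ k) (α k) (β k) n).1 * cos (θ k * y) +
         (trigCoef (θ k) (α k) (β k) n).2 * sin (θ k * y))) y
        = ∑ k ∈ Finset.Icc 1 K, ((trigCoef (θ k) (α k) (β k) (n+1)).1 * cos (θ k * y) +
         (trigCoef (θ k) (α k) (β k) (n+1)).2 * sin (θ k * y)) :=
      (hsum.const_add _).deriv
    simp only [h2]
    simp

lemma parity_split (m : ℕ) (F : ℕ → ℝ) :
    ∑ n ∈ range (2 * m + 1), F n
      = ∑ p ∈ range (m + 1), F (2 * p) + ∑ p ∈ range m, F (2 * p + 1) := by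
  induction m with
  | zero => simp
  | succ m ih =>
    have e1 : 2 * (m + 1) + 1 = (2 * m + 1) + 1 + 1 := by ring
    rw [e1, Finset.sum_range_succ, Finset.sum_range_succ, ih,
      Finset.sum_range_succ (fun p => F (2 * p)) (m + 1),
      Finset.sum_range_succ (fun p => F (2 * p + 1)) m]
    have e2 : 2 * (m + 1) = 2 * m + 1 + 1 := by ring
    rw [e2]
    ring

lemma eventuallyEq_iteratedDeriv {f g : ℝ → ℝ} {x : ℝ} (h : f =ᶠ[nhds x] g) (n : ℕ) :
    iteratedDeriv n f x = iteratedDeriv n g x := by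
  have : ∀ n, iteratedDeriv n f =ᶠ[nhds x] iteratedDeriv n g := by
    intro n
    induction n with
    | zero => simpa using h
    | succ n ih => simpa only [iteratedDeriv_succ] using ih.deriv
  exact (this n).eq_of_nhds

theorem stmt9 (m : ℕ) (hm : 1 ≤ m) (l : ℝ) (hl : 0 < l)
    (A : ℕ → ℝ → ℝ)
    (s : ℕ) (hs : 1 ≤ s) (a : ℕ → ℝ)
    (ha0 : a 0 = -l) (has : a s = l)
    (hmono : ∀ j, j < s → a j < a (j + 1))
    (hstep : ∀ n, n ≤ 2 * m → ∀ j, j < s →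
      ∀ x ∈ Ico (a j) (a (j + 1)), ∀ y ∈ Ico (a j) (a (j + 1)), A n x = A n y)
    (hA0 : ∀ x ∈ Ico (-l) l, A 0 x ≠ 0)
    (σ ω : ℕ → ℝ → ℝ)
    (hσ : ∀ k x, σ k x =
      ∑ n ∈ range (m + 1), (-1 : ℝ) ^ n * A (2 * n) x * (k * π / l) ^ (2 * n))
    (hω : ∀ k x, ω k x =
      ∑ n ∈ range m, (-1 : ℝ) ^ n * A (2 * n + 1) x * (k * π / l) ^ (2 * n + 1))
    (hne : ∀ k, 1 ≤ k → ∀ x ∈ Ico (-l) l, σ k x ^ 2 + ω k x ^ 2 ≠ 0)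
    (K : ℕ) (c d : ℕ → ℝ)
    (f Ψ : ℝ → ℝ)
    (hf : ∀ x, f x = c 0 / 2 + ∑ k ∈ Icc 1 K,
      (c k * cos (k * π * x / l) + d k * sin (k * π * x / l)))
    (hΨ : ∀ x, Ψ x = c 0 / (2 * A 0 x) + ∑ k ∈ Icc 1 K,
      ((c k * σ k x - d k * ω k x) / (σ k x ^ 2 + ω k x ^ 2) * cos (k * π * x / l) +
       (c k * ω k x + d k * σ k x) / (σ k x ^ 2 + ω k x ^ 2) * sin (k * π * x / l))) :
    ∀ x ∈ Ioo (-l) l, (∀ j, 1 ≤ j → j ≤ s - 1 → x ≠ a j) →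
      ∑ n ∈ range (2 * m + 1), A n x * iteratedDeriv n Ψ x = f x := by
  intro x hx hxa
  obtain ⟨hx1, hx2⟩ := hx
  have hxIco : x ∈ Ico (-l) l := ⟨le_of_lt hx1, hx2⟩
  -- find the partition interval containing x
  set J : Finset ℕ := (Finset.range (s + 1)).filter (fun j => a j < x) with hJ
  have h0J : 0 ∈ J := by
    simp only [hJ, Finset.mem_filter, Finset.mem_range]
    exact ⟨Nat.succ_pos s, by rw [ha0]; exact hx1⟩
  have hJne : J.Nonempty := ⟨0, h0J⟩
  set j0 : ℕ := J.max' hJne with hj0def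
  have hj0J : j0 ∈ J := J.max'_mem hJne
  have hj0le : j0 ≤ s := by
    have := (Finset.mem_filter.mp hj0J).1
    simpa [Nat.lt_succ_iff] using Finset.mem_range.mp this
  have haj0 : a j0 < x := (Finset.mem_filter.mp hj0J).2
  have hj0s : j0 < s := by
    rcases lt_or_eq_of_le hj0le with h | h
    · exact h
    · exfalso; rw [h, has] at haj0; exact absurd haj0 (not_lt.mpr (le_of_lt hx2))
  have hxlt : x < a (j0 + 1) := by
    have hle : x ≤ a (j0 + 1) := by
      by_contra hcon
      push_neg at hcon
      have : j0 + 1 ∈ J := by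
        simp only [hJ, Finset.mem_filter, Finset.mem_range]
        exact ⟨by omega, hcon⟩
      have := J.le_max' _ this
      omega
    rcases lt_or_eq_of_le hle with h | h
    · exact h
    · exfalso
      rcases Nat.lt_or_ge (j0 + 1) s with hc | hc
      · exact hxa (j0 + 1) (by omega) (by omega) h
      · have : j0 + 1 = s := by omega
        rw [this, has] at h
        exact absurd h (ne_of_lt hx2)
  have hxmem : x ∈ Ico (a j0) (a (j0 + 1)) := ⟨le_of_lt haj0, hxlt⟩
  have hAeq : ∀ n, n ≤ 2 * m → ∀ y ∈ Ioo (a j0) (a (j0 + 1)), A n y = A n x := by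
    intro n hn y hy
    exact hstep n hn j0 hj0s y ⟨le_of_lt hy.1, hy.2⟩ x hxmem
  -- frozen-coefficient function
  set θ : ℕ → ℝ := fun k => k * π / l with hθdef
  set α : ℕ → ℝ := fun k => (c k * σ k x - d k * ω k x) / (σ k x ^ 2 + ω k x ^ 2) with hαdef
  set β : ℕ → ℝ := fun k => (c k * ω k x + d k * σ k x) / (σ k x ^ 2 + ω k x ^ 2) with hβdef
  set C : ℝ := c 0 / (2 * A 0 x) with hCdef
  set g : ℝ → ℝ := fun y => C + ∑ k ∈ Finset.Icc 1 K,
      (α k * cos (θ k * y) + β k * sin (θ k * y)) with hgdef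
  have harg : ∀ (k : ℕ) (y : ℝ), θ k * y = k * π * y / l := by
    intro k y; simp only [hθdef]; ring
  have hfg : Ψ =ᶠ[nhds x] g := by
    filter_upwards [Ioo_mem_nhds haj0 hxlt] with y hy
    have hσy : ∀ k, σ k y = σ k x := by
      intro k
      rw [hσ, hσ]
      refine Finset.sum_congr rfl fun n hn => ?_
      rw [hAeq (2 * n) (by have := Finset.mem_range.mp hn; omega) y hy]
    have hωy : ∀ k, ω k y = ω k x := by
      intro k
      rw [hω, hω]
      refine Finset.sum_congr rfl fun n hn => ?_
      rw [hAeq (2 * n + 1) (by have := Finset.mem_range.mp hn; omega) y hy]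
    have hA0y : A 0 y = A 0 x := hAeq 0 (by omega) y hy
    rw [hΨ y, hgdef]
    simp only [hA0y, hσy, hωy, hCdef, hαdef, hβdef, harg]
  have key : ∀ n, iteratedDeriv n Ψ x = (if n = 0 then C else 0) +
      ∑ k ∈ Finset.Icc 1 K,
        ((trigCoef (θ k) (α k) (β k) n).1 * cos (θ k * x) +
         (trigCoef (θ k) (α k) (β k) n).2 * sin (θ k * x)) := by
    intro n
    rw [eventuallyEq_iteratedDeriv hfg n, hgdef, trig_iter]
  have hA0x : A 0 x ≠ 0 := hA0 x hxIco
  calc ∑ n ∈ range (2 * m + 1), A n x * iteratedDeriv n Ψ x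
      = ∑ n ∈ range (2 * m + 1), (A n x * (if n = 0 then C else 0) +
          ∑ k ∈ Finset.Icc 1 K, A n x *
            ((trigCoef (θ k) (α k) (β k) n).1 * cos (θ k * x) +
             (trigCoef (θ k) (α k) (β k) n).2 * sin (θ k * x))) := by
        refine Finset.sum_congr rfl fun n _ => ?_
        rw [key n, mul_add, Finset.mul_sum]
    _ = (∑ n ∈ range (2 * m + 1), A n x * (if n = 0 then C else 0)) +
        ∑ k ∈ Finset.Icc 1 K, ∑ n ∈ range (2 * m + 1), A n x *
            ((trigCoef (θ k) (α k) (β k) n).1 * cos (θ k * x) +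
             (trigCoef (θ k) (α k) (β k) n).2 * sin (θ k * x)) := by
        rw [Finset.sum_add_distrib, Finset.sum_comm]
    _ = c 0 / 2 + ∑ k ∈ Finset.Icc 1 K,
          (c k * cos (k * π * x / l) + d k * sin (k * π * x / l)) := by
        congr 1
        · rw [Finset.sum_eq_single_of_mem 0 (Finset.mem_range.mpr (by omega))]
          · simp only [if_pos rfl, ↓reduceIte, hCdef]
            field_simp
          · intro n _ hn0
            simp [hn0]
        · refine Finset.sum_congr rfl fun k hk => ?_
          have hk1 : 1 ≤ k := (Finset.mem_Icc.mp hk).1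
          have hS : σ k x ^ 2 + ω k x ^ 2 ≠ 0 := hne k hk1 x hxIco
          rw [parity_split]
          have heven : ∑ p ∈ range (m + 1), A (2 * p) x *
              ((trigCoef (θ k) (α k) (β k) (2 * p)).1 * cos (θ k * x) +
               (trigCoef (θ k) (α k) (β k) (2 * p)).2 * sin (θ k * x))
              = σ k x * (α k * cos (θ k * x) + β k * sin (θ k * x)) := by
            rw [hσ, Finset.sum_mul]
            refine Finset.sum_congr rfl fun p _ => ?_
            rw [trigCoef_even]
            simp only [hθdef]
            ring
          have hodd : ∑ p ∈ range m, A (2 * p + 1) x *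
              ((trigCoef (θ k) (α k) (β k) (2 * p + 1)).1 * cos (θ k * x) +
               (trigCoef (θ k) (α k) (β k) (2 * p + 1)).2 * sin (θ k * x))
              = ω k x * (β k * cos (θ k * x) - α k * sin (θ k * x)) := by
            rw [hω, Finset.sum_mul]
            refine Finset.sum_congr rfl fun p _ => ?_
            rw [trigCoef_odd]
            simp only [hθdef]
            ring
          rw [heven, hodd, harg, hαdef, hβdef]
          field_simp
          ring
    _ = f x := (hf x).symm
end
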